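/- arXiv:1711.04866 — 4 statements merged into one kernel-verified Lean document; each statement's English description precedes it below -/
import Mathlib

section
/- If g is a right n-Engel element of a group G, then g^{-1} is a left (n+1)-Engel element of G. -/
def grpComm {G : Type*} [Group G] (a b : G) : G := a⁻¹ * b⁻¹ * a * b

/-- Iterated (Engel) commutator: `engel a b n = [a,_n b]`, with `engel a b 0 = a`. -/
def engel {G : Type*} [Group G] (a b : G) : ℕ → G
  | 0 => a
  | n + 1 => grpComm (engel a b n) b

/-- Conjugation commutes with the iterated commutator. -/
lemma engel_conj {G : Type*} [Group G] (a b h : G) :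
    ∀ k : ℕ, engel (h⁻¹ * a * h) (h⁻¹ * b * h) k = h⁻¹ * engel a b k * h := by
  intro k
  induction k with
  | zero => rfl
  | succ k ih => simp only [engel, grpComm, ih]; group

/-- Pulling a conjugation by `a⁻¹` out of a commutator with `a⁻¹`. -/
lemma grpComm_conj {G : Type*} [Group G] (u a : G) :
    grpComm (a * u * a⁻¹) a⁻¹ = a * grpComm u a⁻¹ * a⁻¹ := by
  simp only [grpComm]; group

/-- The key shifting identity: `[x,_{k+2} a⁻¹] = ([a^x,_{k+1} a⁻¹])^{a⁻¹}`. -/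
lemma engel_shift {G : Type*} [Group G] (x a : G) :
    ∀ k : ℕ, engel x a⁻¹ (k + 2) = a * engel (x⁻¹ * a * x) a⁻¹ (k + 1) * a⁻¹ := by
  intro k
  induction k with
  | zero =>
      show grpComm (grpComm x a⁻¹) a⁻¹ = a * grpComm (x⁻¹ * a * x) a⁻¹ * a⁻¹
      simp only [grpComm]; group
  | succ k ih =>
      show grpComm (engel x a⁻¹ (k + 2)) a⁻¹ = a * grpComm (engel (x⁻¹*a*x) a⁻¹ (k+1)) a⁻¹ * a⁻¹
      rw [ih, grpComm_conj]

/-- If `g` is a right `n`-Engel element of `G`, then `g⁻¹` is a left `(n+1)`-Engel element. -/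
theorem stmt1 {G : Type*} [Group G] (n : ℕ) (g : G)
    (hg : ∀ x : G, engel g x n = 1) :
    ∀ x : G, engel x g⁻¹ (n + 1) = 1 := by
  intro x
  cases n with
  | zero =>
      have h1 : g = 1 := hg 1
      show grpComm x g⁻¹ = 1
      rw [h1]; simp [grpComm]
  | succ m =>
      rw [engel_shift]
      have hb : engel (x⁻¹ * g * x) g⁻¹ (m + 1) = 1 := by
        have := engel_conj g (x * g⁻¹ * x⁻¹) x (m + 1)
        have h2 : x⁻¹ * (x * g⁻¹ * x⁻¹) * x = g⁻¹ := by group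
        rw [h2, hg (x * g⁻¹ * x⁻¹)] at this
        rw [this]; group
      rw [hb]; group
end

section
/- Let G = ⟨g, t⟩ be a group generated by two elements g, t such that [g,_n t] = 1. Then the normal closure of ⟨g⟩ in G is generated by the set {g^{t^i} : 0 ≤ i ≤ n-1}. -/
lemma engel_shift_s2 {G : Type*} [Group G] (a b : G) (n : ℕ) :
    engel a b (n + 1) = engel (grpComm a b) b n := by
  induction n with
  | zero => rfl
  | succ n ih => show grpComm (engel a b (n+1)) b = _; rw [ih]; rfl

lemma key {G : Type*} [Group G] (t : G) : ∀ (n : ℕ) (a : G), engel a t n = 1 →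
    ∀ H : Subgroup G, (∀ i, i < n → (t ^ i)⁻¹ * a * t ^ i ∈ H) →
      ((t ^ n)⁻¹ * a * t ^ n ∈ H ∧ t * a * t⁻¹ ∈ H) := by
  intro n
  induction n with
  | zero =>
    intro a ha H _
    have : a = 1 := ha
    simp [this]
  | succ n ih =>
    intro a ha H hH
    set b := grpComm a t with hb
    have hbe : engel b t n = 1 := by rw [← engel_shift_s2]; exact ha
    have hbH : ∀ i, i < n → (t ^ i)⁻¹ * b * t ^ i ∈ H := by
      intro i hi
      have h1 : (t ^ i)⁻¹ * b * t ^ i =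
          ((t ^ i)⁻¹ * a * t ^ i)⁻¹ * ((t ^ (i+1))⁻¹ * a * t ^ (i+1)) := by
        rw [hb]; unfold grpComm; rw [pow_succ]; group
      rw [h1]
      exact mul_mem (inv_mem (hH i (by omega))) (hH (i+1) (by omega))
    obtain ⟨hb1, hb2⟩ := ih b hbe H hbH
    constructor
    · have h1 : (t ^ (n+1))⁻¹ * a * t ^ (n+1) =
          ((t ^ n)⁻¹ * a * t ^ n) * ((t ^ n)⁻¹ * b * t ^ n) := by
        rw [hb]; unfold grpComm; rw [pow_succ]; group
      rw [h1]
      exact mul_mem (hH n (by omega)) hb1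
    · have h1 : t * a * t⁻¹ = a * (t * b * t⁻¹)⁻¹ := by
        rw [hb]; unfold grpComm; group
      rw [h1]
      have ha0 : a ∈ H := by
        have := hH 0 (by omega); simpa using this
      exact mul_mem ha0 (inv_mem hb2)

/-- If `G = ⟨g,t⟩` and `[g,_n t] = 1`, then the normal closure of `⟨g⟩` in `G` is
generated by `{g^{t^i} : 0 ≤ i ≤ n-1}`. -/
theorem stmt2 {G : Type*} [Group G] (n : ℕ) (g t : G)
    (hgen : Subgroup.closure ({g, t} : Set G) = ⊤)
    (hengel : engel g t n = 1) :
    Subgroup.normalClosure ({g} : Set G) =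
      Subgroup.closure {x : G | ∃ i : ℕ, i < n ∧ x = (t ^ i)⁻¹ * g * t ^ i} := by
  set S : Set G := {x : G | ∃ i : ℕ, i < n ∧ x = (t ^ i)⁻¹ * g * t ^ i} with hS
  set H := Subgroup.closure S with hHdef
  have hSH : ∀ i, i < n → (t ^ i)⁻¹ * g * t ^ i ∈ H := fun i hi =>
    Subgroup.subset_closure ⟨i, hi, rfl⟩
  obtain ⟨hkey1, hkey2⟩ := key t n g hengel H hSH
  -- g ∈ H (even when n = 0, since then g = 1)
  have hgH : g ∈ H := by
    rcases Nat.eq_zero_or_pos n with h0 | hpos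
    · subst h0; have : g = 1 := hengel; rw [this]; exact H.one_mem
    · simpa using hSH 0 hpos
  -- t normalizes H
  have htconj : ∀ h ∈ H, t⁻¹ * h * t ∈ H := by
    intro h hh
    induction hh using Subgroup.closure_induction with
    | mem x hx =>
      obtain ⟨i, hi, rfl⟩ := hx
      have h1 : t⁻¹ * ((t ^ i)⁻¹ * g * t ^ i) * t = (t ^ (i+1))⁻¹ * g * t ^ (i+1) := by
        rw [pow_succ]; group
      rw [h1]
      rcases Nat.lt_or_ge (i+1) n with hlt | hge
      · exact hSH _ hlt
      · have : i + 1 = n := by omega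
        rw [this]; exact hkey1
    | one => simpa using H.one_mem
    | mul x y _ _ hx hy =>
      have : t⁻¹ * (x * y) * t = (t⁻¹ * x * t) * (t⁻¹ * y * t) := by group
      rw [this]; exact mul_mem hx hy
    | inv x _ hx =>
      have : t⁻¹ * x⁻¹ * t = (t⁻¹ * x * t)⁻¹ := by group
      rw [this]; exact inv_mem hx
  have htconj' : ∀ h ∈ H, t * h * t⁻¹ ∈ H := by
    intro h hh
    induction hh using Subgroup.closure_induction with
    | mem x hx =>
      obtain ⟨i, hi, rfl⟩ := hx
      rcases Nat.eq_zero_or_pos i with h0 | hpos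
      · subst h0; simpa using hkey2
      · obtain ⟨j, rfl⟩ := Nat.exists_eq_succ_of_ne_zero (Nat.pos_iff_ne_zero.mp hpos)
        have h1 : t * ((t ^ (j+1))⁻¹ * g * t ^ (j+1)) * t⁻¹ = (t ^ j)⁻¹ * g * t ^ j := by
          rw [pow_succ]; group
        rw [h1]; exact hSH j (by omega)
    | one => simpa using H.one_mem
    | mul x y _ _ hx hy =>
      have : t * (x * y) * t⁻¹ = (t * x * t⁻¹) * (t * y * t⁻¹) := by group
      rw [this]; exact mul_mem hx hy
    | inv x _ hx =>
      have : t * x⁻¹ * t⁻¹ = (t * x * t⁻¹)⁻¹ := by group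
      rw [this]; exact inv_mem hx
  -- H is normal via normalizer
  have hnorm : H.Normal := by
    rw [← Subgroup.normalizer_eq_top_iff, eq_top_iff, ← hgen]
    rw [Subgroup.closure_le]
    rintro x (rfl | rfl)
    · exact Subgroup.le_normalizer hgH
    · rw [SetLike.mem_coe, Subgroup.mem_normalizer_iff]
      intro h
      constructor
      · intro hh; exact htconj' h hh
      · intro hh
        have := htconj _ hh
        simpa [mul_assoc] using this
  apply le_antisymm
  · have : ({g} : Set G) ⊆ H := by intro x hx; rw [Set.mem_singleton_iff] at hx; subst hx; exact hgH
    exact Subgroup.normalClosure_le_normal this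
  · rw [Subgroup.closure_le]
    rintro x ⟨i, hi, rfl⟩
    have hg : g ∈ Subgroup.normalClosure ({g} : Set G) :=
      Subgroup.subset_normalClosure rfl
    have := (Subgroup.normalClosure_normal).conj_mem g hg (t ^ i)⁻¹
    simpa using this
end

section
/- For every natural number j and elements g, t of a group G, the subgroup ⟨g, g^t, ..., g^{t^j}⟩ equals the subgroup ⟨g, [g,t], [g,_2 t], ..., [g,_j t]⟩. -/
section aux

variable {G : Type*} [Group G] (g t : G)

private def conjT (t : G) : G →* G := (MulAut.conj t⁻¹).toMonoidHom

private lemma conjT_apply (x : G) : conjT t x = t⁻¹ * x * t := by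
  simp [conjT, MulAut.conj_apply, mul_assoc]

private def Cset (j : ℕ) : Set G := {x : G | ∃ i : ℕ, i ≤ j ∧ x = (t ^ i)⁻¹ * g * t ^ i}

private def Eset (j : ℕ) : Set G := {x : G | ∃ i : ℕ, i ≤ j ∧ x = engel g t i}

private lemma Cset_mono {i j : ℕ} (h : i ≤ j) : Cset g t i ⊆ Cset g t j := by
  rintro x ⟨k, hk, rfl⟩; exact ⟨k, hk.trans h, rfl⟩

private lemma Eset_mono {i j : ℕ} (h : i ≤ j) : Eset g t i ⊆ Eset g t j := by
  rintro x ⟨k, hk, rfl⟩; exact ⟨k, hk.trans h, rfl⟩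

private lemma engel_succ (i : ℕ) :
    engel g t (i + 1) = (engel g t i)⁻¹ * conjT t (engel g t i) := by
  simp [engel, grpComm, conjT_apply, mul_assoc]

private lemma engel_mem (i : ℕ) : engel g t i ∈ Subgroup.closure (Cset g t i) := by
  induction i with
  | zero =>
      exact Subgroup.subset_closure ⟨0, le_refl _, by simp [engel]⟩
  | succ n ih =>
      rw [engel_succ]
      have h1 : engel g t n ∈ Subgroup.closure (Cset g t (n + 1)) :=
        Subgroup.closure_mono (Cset_mono g t (Nat.le_succ n)) ih
      have h2 : conjT t (engel g t n) ∈ Subgroup.closure (Cset g t (n + 1)) := by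
        have hmap : (Subgroup.closure (Cset g t n)).map (conjT t) ≤
            Subgroup.closure (Cset g t (n + 1)) := by
          rw [MonoidHom.map_closure]
          apply Subgroup.closure_mono
          rintro x ⟨y, ⟨k, hk, rfl⟩, rfl⟩
          refine ⟨k + 1, Nat.succ_le_succ hk, ?_⟩
          rw [conjT_apply]
          group
        exact hmap ⟨_, ih, rfl⟩
      exact mul_mem (inv_mem h1) h2
  
private lemma conj_mem (i : ℕ) :
    (t ^ i)⁻¹ * g * t ^ i ∈ Subgroup.closure (Eset g t i) := by
  induction i with
  | zero =>
      exact Subgroup.subset_closure ⟨0, le_refl _, by simp [engel]⟩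
  | succ n ih =>
      have key : (t ^ (n + 1))⁻¹ * g * t ^ (n + 1) =
          conjT t ((t ^ n)⁻¹ * g * t ^ n) := by
        rw [conjT_apply]; group
      rw [key]
      have hmap : (Subgroup.closure (Eset g t n)).map (conjT t) ≤
          Subgroup.closure (Eset g t (n + 1)) := by
        rw [MonoidHom.map_closure]
        rw [Subgroup.closure_le]
        rintro x ⟨y, ⟨k, hk, rfl⟩, rfl⟩
        have : conjT t (engel g t k) = engel g t k * engel g t (k + 1) := by
          rw [engel_succ]; group
        rw [this]
        exact mul_mem
          (Subgroup.subset_closure ⟨k, hk.trans (Nat.le_succ n), rfl⟩)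
          (Subgroup.subset_closure ⟨k + 1, Nat.succ_le_succ hk, rfl⟩)
      exact hmap ⟨_, ih, rfl⟩

end aux

/-- `⟨g, g^t, ..., g^{t^j}⟩ = ⟨g, [g,t], ..., [g,_j t]⟩`. -/
theorem stmt3 {G : Type*} [Group G] (j : ℕ) (g t : G) :
    Subgroup.closure {x : G | ∃ i : ℕ, i ≤ j ∧ x = (t ^ i)⁻¹ * g * t ^ i} =
      Subgroup.closure {x : G | ∃ i : ℕ, i ≤ j ∧ x = engel g t i} := by
  apply le_antisymm
  · rw [Subgroup.closure_le]
    rintro x ⟨i, hi, rfl⟩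
    exact Subgroup.closure_mono (Eset_mono g t hi) (conj_mem g t i)
  · rw [Subgroup.closure_le]
    rintro x ⟨i, hi, rfl⟩
    exact Subgroup.closure_mono (Cset_mono g t hi) (engel_mem g t i)
end

section
/- Let G = U⟨t⟩ be a group that is a product of a normal abelian subgroup U and a cyclic subgroup ⟨t⟩. Suppose there is a generating set A of U such that [a,_n t] = 1 for all a in A. Then [U,_n t] = 1 and G is nilpotent of class at most n+1. -/
section Aux

variable {G : Type*} [Group G]

lemma engel_succ_s6 (a b : G) (k : ℕ) : engel a b (k + 1) = grpComm (engel a b k) b := rfl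

lemma conj_zpow_mem (U : Subgroup G) [U.Normal] (t : G) {u : G} (hu : u ∈ U) (m : ℤ) :
    t ^ m * u * t ^ (-m) ∈ U := by
  have := Subgroup.Normal.conj_mem ‹U.Normal› _ hu (t ^ m)
  rwa [← zpow_neg] at this

lemma engel_mem_s6 (U : Subgroup G) [U.Normal] (t : G) {u : G} (hu : u ∈ U) (k : ℕ) :
    engel u t k ∈ U := by
  induction k with
  | zero => exact hu
  | succ k ih =>
    rw [engel_succ_s6]
    have h : grpComm (engel u t k) t
        = (engel u t k)⁻¹ * (t⁻¹ * engel u t k * (t⁻¹)⁻¹) := by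
      unfold grpComm; group
    rw [h]
    exact mul_mem (inv_mem ih) (Subgroup.Normal.conj_mem ‹U.Normal› _ ih t⁻¹)

lemma engel_one' (t : G) (k : ℕ) : engel (1 : G) t k = 1 := by
  induction k with
  | zero => rfl
  | succ k ih => rw [engel_succ_s6, ih]; unfold grpComm; group

lemma engel_mul (U : Subgroup G) [U.Normal] (t : G)
    (habel : ∀ a ∈ U, ∀ b ∈ U, a * b = b * a) {u v : G} (hu : u ∈ U) (hv : v ∈ U) (k : ℕ) :
    engel (u * v) t k = engel u t k * engel v t k := by
  induction k with
  | zero => rfl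
  | succ k ih =>
    rw [engel_succ_s6, engel_succ_s6, engel_succ_s6, ih]
    set a := engel u t k with ha
    set b := engel v t k with hb
    have hbU : b ∈ U := engel_mem_s6 U t hv k
    have hX : a⁻¹ * t⁻¹ * a * t ∈ U := by
      have := engel_mem_s6 U t hu (k + 1)
      rw [engel_succ_s6] at this; exact this
    have h1 : grpComm (a * b) t = b⁻¹ * (a⁻¹ * t⁻¹ * a * t) * (t⁻¹ * b * t) := by
      unfold grpComm; group
    have h2 : grpComm a t * grpComm b t = a⁻¹ * t⁻¹ * a * t * b⁻¹ * (t⁻¹ * b * t) := by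
      unfold grpComm; group
    rw [h1, h2, habel _ (inv_mem hbU) _ hX]

lemma engel_inv (U : Subgroup G) [U.Normal] (t : G)
    (habel : ∀ a ∈ U, ∀ b ∈ U, a * b = b * a) {u : G} (hu : u ∈ U) (k : ℕ) :
    engel u⁻¹ t k = (engel u t k)⁻¹ := by
  have h : engel u t k * engel u⁻¹ t k = 1 := by
    rw [← engel_mul U t habel hu (inv_mem hu), mul_inv_cancel, engel_one']
  exact (inv_eq_of_mul_eq_one_right h).symm

lemma engel_conj_t (t u : G) (k : ℕ) :
    t⁻¹ * engel u t k * t = engel (t⁻¹ * u * t) t k := by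
  induction k with
  | zero => rfl
  | succ k ih =>
    rw [engel_succ_s6, engel_succ_s6, ← ih]
    unfold grpComm; group

lemma engel_conj_t' (t u : G) (k : ℕ) :
    t * engel u t k * t⁻¹ = engel (t * u * t⁻¹) t k := by
  induction k with
  | zero => rfl
  | succ k ih =>
    rw [engel_succ_s6, engel_succ_s6, ← ih]
    unfold grpComm; group

/-- The subgroup `[U,_k t]`. -/
def engelSub (U : Subgroup G) [U.Normal] (t : G)
    (habel : ∀ a ∈ U, ∀ b ∈ U, a * b = b * a) (k : ℕ) : Subgroup G where
  carrier := {g | ∃ u ∈ U, engel u t k = g}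
  one_mem' := ⟨1, one_mem U, engel_one' t k⟩
  mul_mem' := by
    rintro a b ⟨u, hu, rfl⟩ ⟨v, hv, rfl⟩
    exact ⟨u * v, mul_mem hu hv, engel_mul U t habel hu hv k⟩
  inv_mem' := by
    rintro a ⟨u, hu, rfl⟩
    exact ⟨u⁻¹, inv_mem hu, engel_inv U t habel hu k⟩

variable (U : Subgroup G) [U.Normal] (t : G) (habel : ∀ a ∈ U, ∀ b ∈ U, a * b = b * a)

lemma engelSub_le (k : ℕ) {g : G} (hg : g ∈ engelSub U t habel k) : g ∈ U := by
  obtain ⟨u, hu, rfl⟩ := hg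
  exact engel_mem_s6 U t hu k

lemma engelSub_conj_t {k : ℕ} {x : G} (hx : x ∈ engelSub U t habel k) :
    t⁻¹ * x * t ∈ engelSub U t habel k := by
  obtain ⟨u, hu, rfl⟩ := hx
  refine ⟨t⁻¹ * u * t, ?_, (engel_conj_t t u k).symm⟩
  have := Subgroup.Normal.conj_mem ‹U.Normal› _ hu t⁻¹
  simpa using this

lemma engelSub_conj_t' {k : ℕ} {x : G} (hx : x ∈ engelSub U t habel k) :
    t * x * t⁻¹ ∈ engelSub U t habel k := by
  obtain ⟨u, hu, rfl⟩ := hx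
  exact ⟨t * u * t⁻¹, Subgroup.Normal.conj_mem ‹U.Normal› _ hu t, (engel_conj_t' t u k).symm⟩

lemma grpComm_zpow_mem {k : ℕ} {x : G} (hx : x ∈ engelSub U t habel k) (m : ℤ) :
    grpComm x (t ^ m) ∈ engelSub U t habel (k + 1) := by
  have hphi : grpComm x t ∈ engelSub U t habel (k + 1) := by
    obtain ⟨u, hu, rfl⟩ := hx
    exact ⟨u, hu, rfl⟩
  induction m using Int.induction_on with
  | zero =>
    have h : grpComm x (t ^ (0 : ℤ)) = 1 := by unfold grpComm; group
    rw [h]; exact one_mem _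
  | succ m ih =>
    have h : grpComm x (t ^ ((m : ℤ) + 1))
        = grpComm x t * (t⁻¹ * grpComm x (t ^ (m : ℤ)) * t) := by
      unfold grpComm; group
    rw [h]
    exact mul_mem hphi (engelSub_conj_t U t habel ih)
  | pred m ih =>
    have h : grpComm x (t ^ (-(m : ℤ) - 1))
        = (t * (grpComm x t)⁻¹ * t⁻¹) * (t * grpComm x (t ^ (-(m : ℤ))) * t⁻¹) := by
      unfold grpComm; group
    rw [h]
    exact mul_mem (engelSub_conj_t' U t habel (inv_mem hphi))
      (engelSub_conj_t' U t habel ih)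

lemma commutator_mem_engelSub (hprod : ∀ g : G, ∃ u ∈ U, ∃ k : ℤ, g = u * t ^ k)
    {k : ℕ} {x : G} (hx : x ∈ engelSub U t habel k) (g : G) :
    grpComm x g ∈ engelSub U t habel (k + 1) := by
  obtain ⟨w, hw, m, rfl⟩ := hprod g
  have hxU : x ∈ U := engelSub_le U t habel k hx
  have hcomm : w⁻¹ * x * w = x := by rw [habel _ (inv_mem hw) x hxU]; group
  have h2 : grpComm x (w * t ^ m) = grpComm x (t ^ m) := by
    have h : grpComm x (w * t ^ m) = x⁻¹ * t ^ (-m) * (w⁻¹ * x * w) * t ^ m := by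
      unfold grpComm; group
    rw [h, hcomm]; unfold grpComm; group
  rw [h2]
  exact grpComm_zpow_mem U t habel hx m

lemma lcs_le_engelSub (hprod : ∀ g : G, ∃ u ∈ U, ∃ k : ℤ, g = u * t ^ k) (k : ℕ) :
    (⊤ : Subgroup G).lowerCentralSeries (k + 1) ≤ engelSub U t habel k := by
  induction k with
  | zero =>
    rw [Subgroup.lowerCentralSeries_succ, Subgroup.lowerCentralSeries_zero]
    refine (Subgroup.closure_le _).mpr ?_
    rintro x ⟨p, -, q, -, rfl⟩
    obtain ⟨u, hu, a, rfl⟩ := hprod p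
    obtain ⟨v, hv, b, rfl⟩ := hprod q
    have key : (u * t ^ a) * (v * t ^ b) * (u * t ^ a)⁻¹ * (v * t ^ b)⁻¹
        = u * (t ^ a * v * t ^ (-a)) * (t ^ b * u⁻¹ * t ^ (-b)) * v⁻¹ := by group
    refine ⟨_, ?_, rfl⟩
    show (u * t ^ a) * (v * t ^ b) * (u * t ^ a)⁻¹ * (v * t ^ b)⁻¹ ∈ U
    rw [key]
    exact mul_mem (mul_mem (mul_mem hu (conj_zpow_mem U t hv a))
      (conj_zpow_mem U t (inv_mem hu) b)) (inv_mem hv)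
  | succ k ih =>
    rw [Subgroup.lowerCentralSeries_succ]
    refine (Subgroup.closure_le _).mpr ?_
    rintro x ⟨p, hp, q, -, rfl⟩
    have hp' : p⁻¹ ∈ engelSub U t habel k := inv_mem (ih hp)
    have := commutator_mem_engelSub U t habel hprod hp' q⁻¹
    have h : grpComm p⁻¹ q⁻¹ = p * q * p⁻¹ * q⁻¹ := by unfold grpComm; group
    rwa [h] at this

end Aux

/-- If `G = U⟨t⟩` with `U` a normal abelian subgroup generated by a set `A` with
`[a,_n t] = 1` for all `a ∈ A`, then `[U,_n t] = 1` and `G` is nilpotent of class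
at most `n+1`. -/
theorem stmt6 {G : Type*} [Group G] (U : Subgroup G) [U.Normal]
    (habel : ∀ a ∈ U, ∀ b ∈ U, a * b = b * a) (t : G) (n : ℕ)
    (hprod : ∀ g : G, ∃ u ∈ U, ∃ k : ℤ, g = u * t ^ k)
    (A : Set G) (hAU : Subgroup.closure A = U)
    (hA : ∀ a ∈ A, engel a t n = 1) :
    (∀ u ∈ U, engel u t n = 1) ∧ (⊤ : Subgroup G).lowerCentralSeries (n + 2) = ⊥ := by
  set S : Subgroup G :=
    { carrier := {u | u ∈ U ∧ engel u t n = 1}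
      one_mem' := ⟨one_mem U, engel_one' t n⟩
      mul_mem' := by
        rintro a b ⟨ha, ha'⟩ ⟨hb, hb'⟩
        exact ⟨mul_mem ha hb, by rw [engel_mul U t habel ha hb, ha', hb', one_mul]⟩
      inv_mem' := by
        rintro a ⟨ha, ha'⟩
        exact ⟨inv_mem ha, by rw [engel_inv U t habel ha, ha', inv_one]⟩ } with hS
  have hUS : U ≤ S := by
    rw [← hAU]
    refine (Subgroup.closure_le S).mpr ?_
    intro a haA
    exact ⟨hAU ▸ Subgroup.subset_closure haA, hA a haA⟩
  have part1 : ∀ u ∈ U, engel u t n = 1 := fun u hu => (hUS hu).2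
  refine ⟨part1, ?_⟩
  have hbot : engelSub U t habel n ≤ ⊥ := by
    rintro x ⟨u, hu, rfl⟩
    simpa using part1 u hu
  have h1 : (⊤ : Subgroup G).lowerCentralSeries (n + 1) ≤ ⊥ :=
    le_trans (lcs_le_engelSub U t habel hprod n) hbot
  rw [eq_bot_iff]
  calc (⊤ : Subgroup G).lowerCentralSeries (n + 2) ≤ (⊤ : Subgroup G).lowerCentralSeries (n + 1) :=
        Subgroup.lowerCentralSeries_antitone (S := ⊤) (Nat.le_succ _)
    _ ≤ ⊥ := h1
end
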